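/- For nonnegative integers a and b, (a+b+1)!/(a!·b!) divides lcm(a+1, a+2, ..., a+b+1). -/

import Mathlib

open Finset

lemma aux_sum (b : ℕ) : ∀ a : ℕ, ∑ i ∈ range (b+1), (-1:ℚ)^i * (b.choose i) / (a+i+1)
    = (a.factorial : ℚ) * (b.factorial : ℚ) / ((a+b+1).factorial : ℚ) := by
  induction b with
  | zero =>
    intro a
    rw [Finset.sum_range_one]
    have h : (((a+0+1).factorial : ℕ) : ℚ) = ((a:ℚ)+1) * a.factorial := by
      show (((a+1).factorial : ℕ) : ℚ) = _
      rw [Nat.factorial_succ]; push_cast; ring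
    rw [h]
    have h2 : (a.factorial : ℚ) ≠ 0 := by positivity
    have h3 : ((a:ℚ)+1) ≠ 0 := by positivity
    field_simp
    simp
  | succ b ih =>
    intro a
    have ih2 := ih (a+1)
    push_cast at ih2
    have key : ∑ i ∈ range (b+2), (-1:ℚ)^i * ((b+1).choose i) / (a+i+1)
        = (∑ i ∈ range (b+1), (-1:ℚ)^i * (b.choose i) / (a+i+1))
          - ∑ i ∈ range (b+1), (-1:ℚ)^i * (b.choose i) / (((a:ℚ)+1)+i+1) := by
      have hb : ∑ i ∈ range (b+1), (-1:ℚ)^i * (b.choose i) / (a+i+1)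
          = ∑ i ∈ range (b+2), (-1:ℚ)^i * (b.choose i) / (a+i+1) := by
        rw [Finset.sum_range_succ (fun i => (-1:ℚ)^i * (b.choose i) / (a+i+1)) (b+1)]
        simp
      rw [hb, Finset.sum_range_succ' (fun i => (-1:ℚ)^i * ((b+1).choose i) / (a+i+1)),
        Finset.sum_range_succ' (fun i => (-1:ℚ)^i * (b.choose i) / (a+i+1))]
      rw [eq_sub_iff_add_eq, add_right_comm, ← Finset.sum_add_distrib]
      congr 1
      · apply Finset.sum_congr rfl
        intro i _
        have hc : ((b+1).choose (i+1) : ℚ) = (b.choose i : ℚ) + (b.choose (i+1) : ℚ) := by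
          rw [Nat.choose_succ_succ]; push_cast; ring
        simp only [hc]
        push_cast
        ring
      · norm_num
    rw [key, ih a, ih2]
    have h1 : ((a+1).factorial : ℚ) = ((a:ℚ)+1) * a.factorial := by
      rw [Nat.factorial_succ]; push_cast; ring
    have h2 : ((b+1).factorial : ℚ) = ((b:ℚ)+1) * b.factorial := by
      rw [Nat.factorial_succ]; push_cast; ring
    have h3 : (((a+1)+b+1).factorial : ℚ) = ((a:ℚ)+b+2) * (a+b+1).factorial := by
      have he : (a+1)+b+1 = (a+b+1)+1 := by ring
      rw [he, Nat.factorial_succ]; push_cast; ring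
    have h4 : ((a+(b+1)+1).factorial : ℚ) = ((a:ℚ)+b+2) * (a+b+1).factorial := by
      have he : a+(b+1)+1 = (a+b+1)+1 := by ring
      rw [he, Nat.factorial_succ]; push_cast; ring
    rw [h1, h2, h3, h4]
    have hf1 : ((a+b+1).factorial : ℚ) ≠ 0 := by positivity
    have hf2 : ((a:ℚ)+b+2) ≠ 0 := by positivity
    field_simp
    ring

theorem factorial_ratio_dvd_lcm_Icc (a b : ℕ) :
    (a + b + 1).factorial / (a.factorial * b.factorial) ∣
      (Finset.Icc (a + 1) (a + b + 1)).lcm id := by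
  set L := (Finset.Icc (a + 1) (a + b + 1)).lcm id with hL
  have hdvdfac : a.factorial * b.factorial ∣ (a+b+1).factorial :=
    (Nat.factorial_mul_factorial_dvd_factorial_add a b).trans
      (Nat.factorial_dvd_factorial (by omega))
  have hmem : ∀ i ∈ range (b+1), (a+i+1) ∣ L := by
    intro i hi
    apply Finset.dvd_lcm (f := id) (b := a+i+1)
    simp only [Finset.mem_range] at hi
    simp only [Finset.mem_Icc]
    omega
  set N := (a+b+1).factorial / (a.factorial * b.factorial) with hN
  have hNcast : (N : ℚ) = ((a+b+1).factorial : ℚ) / ((a.factorial : ℚ) * (b.factorial : ℚ)) := by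
    rw [hN, Nat.cast_div hdvdfac (by positivity)]
    push_cast; ring
  have hN0 : 0 < N := Nat.div_pos (Nat.le_of_dvd (Nat.factorial_pos _) hdvdfac) (by positivity)
  set z : ℤ := ∑ i ∈ range (b+1), (-1:ℤ)^i * (b.choose i) * ((L / (a+i+1) : ℕ) : ℤ) with hz
  have hzq : (z : ℚ) = (L : ℚ) / (N : ℚ) := by
    have hrhs : (L : ℚ) / (N : ℚ)
        = (L : ℚ) * ((a.factorial : ℚ) * (b.factorial : ℚ) / ((a+b+1).factorial : ℚ)) := by
      rw [hNcast]
      have hf1 : ((a+b+1).factorial : ℚ) ≠ 0 := by positivity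
      have hf2 : (a.factorial : ℚ) ≠ 0 := by positivity
      have hf3 : (b.factorial : ℚ) ≠ 0 := by positivity
      field_simp
    rw [hrhs, ← aux_sum b a, Finset.mul_sum, hz, Int.cast_sum]
    apply Finset.sum_congr rfl
    intro i hi
    have h := Nat.cast_div (K := ℚ) (hmem i hi) (by positivity)
    push_cast at h
    simp only [Int.cast_mul, Int.cast_pow, Int.cast_neg, Int.cast_one, Int.cast_natCast]
    rw [h]
    ring
  have hLz : (L : ℚ) = (z : ℚ) * (N : ℚ) := by
    rw [hzq, div_mul_cancel₀]
    exact_mod_cast hN0.ne'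
  have hint : (L : ℤ) = z * (N : ℤ) := by exact_mod_cast hLz
  have hdvd : (N : ℤ) ∣ (L : ℤ) := ⟨z, by rw [hint]; ring⟩
  exact_mod_cast hdvd
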